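/- Under axioms (H1)–(H4), for every object X ∈ C and every orthoclosed subspace M of the Hermitian space V(X), there exists a dagger biproduct A →h_A X ←h_B B in C with M = image V(h_A) and M⊥ = image V(h_B); moreover V(h_A ∘ h_A†) is the orthogonal projection of V(X) onto M. Consequently V(X) is an orthomodular space: every orthoclosed subspace is splitting. -/

import Mathlib

universe v u

open CategoryTheory CategoryTheory.Limits

/-- A dagger structure on a category: an involutive contravariant
identity-on-objects endofunctor. -/
class DaggerStruct (C : Type u) [Category.{v} C] where
  dag : ∀ {A B : C}, (A ⟶ B) → (B ⟶ A)
  dag_id : ∀ (A : C), dag (𝟙 A) = 𝟙 A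
  dag_comp : ∀ {A B D : C} (f : A ⟶ B) (g : B ⟶ D), dag (f ≫ g) = dag g ≫ dag f
  dag_dag : ∀ {A B : C} (f : A ⟶ B), dag (dag f) = f

/-- `f` is a dagger monomorphism: `f† ∘ f = id`. -/
def IsDagMono {C : Type u} [Category.{v} C] [DaggerStruct C] {A B : C} (f : A ⟶ B) : Prop :=
  f ≫ DaggerStruct.dag f = 𝟙 A

/-- The canonical semiadditive addition induced by binary biproducts:
`f + g = ∇ ∘ (f ⊕ g) ∘ Δ`. -/
noncomputable def daggerAdd {C : Type u} [Category.{v} C] [HasZeroMorphisms C] [HasBinaryBiproducts C]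
    {X Y : C} (f g : X ⟶ Y) : X ⟶ Y :=
  biprod.lift (𝟙 X) (𝟙 X) ≫ biprod.map f g ≫ biprod.desc (𝟙 Y) (𝟙 Y)

/-- `I` is dagger simple: nonzero, and every nonzero dagger monomorphism into `I`
is a dagger isomorphism. -/
def DagSimple {C : Type u} [Category.{v} C] [HasZeroMorphisms C] [DaggerStruct C]
    (I : C) : Prop :=
  ¬ IsZero I ∧ ∀ {A : C} (f : A ⟶ I), f ≠ 0 → IsDagMono f → DaggerStruct.dag f ≫ f = 𝟙 I

namespace Stmt17Aux

open DaggerStruct ZeroObject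

variable {C : Type u} [Category.{v} C]

section Basic
variable [DaggerStruct C]

lemma dagMono_cancel {A B : C} {f : A ⟶ B} (hf : IsDagMono f) {Z : C} {u v : Z ⟶ A}
    (h : u ≫ f = v ≫ f) : u = v := by
  have h2 : u ≫ (f ≫ dag f) = v ≫ (f ≫ dag f) := by
    rw [← Category.assoc, h, Category.assoc]
  rw [show f ≫ dag f = 𝟙 _ from hf] at h2
  simpa using h2

lemma dagMono_comp {A B D : C} {f : A ⟶ B} {g : B ⟶ D} (hf : IsDagMono f) (hg : IsDagMono g) :
    IsDagMono (f ≫ g) := by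
  unfold IsDagMono at *
  rw [dag_comp, Category.assoc, ← Category.assoc g, hg, Category.id_comp, hf]

variable [HasZeroObject C] [HasZeroMorphisms C]

lemma dag_zero {A B : C} : dag (0 : A ⟶ B) = 0 := by
  have h : (0 : A ⟶ B) = (0 : A ⟶ (0 : C)) ≫ (0 : (0 : C) ⟶ B) := by simp
  rw [h, dag_comp]
  have h1 : dag (0 : (0 : C) ⟶ B) = 0 := (isZero_zero C).eq_of_tgt _ _
  rw [h1, zero_comp]

lemma dagMono_of_src_zero {Z : C} (f : (0 : C) ⟶ Z) : IsDagMono f :=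
  (isZero_zero C).eq_of_src _ _

end Basic

section Biprod
variable [HasZeroMorphisms C] [HasBinaryBiproducts C] [DaggerStruct C]
variable (hbip : ∀ X Y : C, dag (biprod.inl : X ⟶ X ⊞ Y) = biprod.fst ∧
        dag (biprod.inr : Y ⟶ X ⊞ Y) = biprod.snd)

include hbip

lemma dag_desc {P Q Z : C} (p : P ⟶ Z) (q : Q ⟶ Z) :
    dag (biprod.desc p q) = biprod.lift (dag p) (dag q) := by
  apply biprod.hom_ext
  · rw [biprod.lift_fst, ← (hbip P Q).1, ← dag_comp, biprod.inl_desc]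
  · rw [biprod.lift_snd, ← (hbip P Q).2, ← dag_comp, biprod.inr_desc]

lemma dag_lift {Z P Q : C} (p : Z ⟶ P) (q : Z ⟶ Q) :
    dag (biprod.lift p q) = biprod.desc (dag p) (dag q) := by
  apply biprod.hom_ext'
  · have hinl : (biprod.inl : P ⟶ P ⊞ Q) = dag (biprod.fst) := by
      rw [← (hbip P Q).1, dag_dag]
    rw [biprod.inl_desc, hinl, ← dag_comp, biprod.lift_fst]
  · have hinr : (biprod.inr : Q ⟶ P ⊞ Q) = dag (biprod.snd) := by
      rw [← (hbip P Q).2, dag_dag]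
    rw [biprod.inr_desc, hinr, ← dag_comp, biprod.lift_snd]

lemma dag_map {P Q P' Q' : C} (f : P ⟶ P') (g : Q ⟶ Q') :
    dag (biprod.map f g) = biprod.map (dag f) (dag g) := by
  apply biprod.hom_ext
  · rw [biprod.map_fst, ← (hbip P Q).1, ← dag_comp, biprod.inl_map, dag_comp, (hbip P' Q').1]
  · rw [biprod.map_snd, ← (hbip P Q).2, ← dag_comp, biprod.inr_map, dag_comp, (hbip P' Q').2]

end Biprod

section Add
variable [HasZeroMorphisms C] [HasBinaryBiproducts C]

lemma daggerAdd_comp {X Y Z : C} (f g : X ⟶ Y) (h : Y ⟶ Z) :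
    daggerAdd f g ≫ h = daggerAdd (f ≫ h) (g ≫ h) := by
  have key : biprod.map f g ≫ biprod.desc (𝟙 Y) (𝟙 Y) ≫ h
      = biprod.map (f ≫ h) (g ≫ h) ≫ biprod.desc (𝟙 Z) (𝟙 Z) := by
    apply biprod.hom_ext' <;> simp
  simp only [daggerAdd, Category.assoc]
  rw [key]

lemma comp_daggerAdd {X Y Z : C} (h : Z ⟶ X) (f g : X ⟶ Y) :
    h ≫ daggerAdd f g = daggerAdd (h ≫ f) (h ≫ g) := by
  have key : (h ≫ biprod.lift (𝟙 X) (𝟙 X)) ≫ biprod.map f g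
      = biprod.lift (𝟙 Z) (𝟙 Z) ≫ biprod.map (h ≫ f) (h ≫ g) := by
    apply biprod.hom_ext <;> simp
  simp only [daggerAdd, ← Category.assoc]
  rw [key]

lemma daggerAdd_zero {X Y : C} (f : X ⟶ Y) : daggerAdd f 0 = f := by
  have key : biprod.lift (𝟙 X) (𝟙 X) ≫ biprod.map f (0 : X ⟶ Y) = f ≫ biprod.inl := by
    apply biprod.hom_ext <;> simp
  rw [daggerAdd, ← Category.assoc, key, Category.assoc, biprod.inl_desc, Category.comp_id]

lemma zero_daggerAdd {X Y : C} (f : X ⟶ Y) : daggerAdd 0 f = f := by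
  have key : biprod.lift (𝟙 X) (𝟙 X) ≫ biprod.map (0 : X ⟶ Y) f = f ≫ biprod.inr := by
    apply biprod.hom_ext <;> simp
  rw [daggerAdd, ← Category.assoc, key, Category.assoc, biprod.inr_desc, Category.comp_id]

end Add

section Lists
variable [HasZeroObject C] [HasZeroMorphisms C] [HasBinaryBiproducts C] [DaggerStruct C]
variable (I X : C)

/-- Iterated binary biproduct of copies of `I`, one for each entry of `l`. -/
noncomputable def objL : List (I ⟶ X) → C
  | [] => 0
  | _ :: t => I ⊞ objL t

/-- The canonical map from the iterated biproduct into `X`. -/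
noncomputable def dXl : (l : List (I ⟶ X)) → (objL I X l ⟶ X)
  | [] => 0
  | e :: t => biprod.desc e (dXl t)

open Classical in
/-- The "inclusion" between iterated biproducts, for sorted lists. -/
noncomputable def incl : (l l' : List (I ⟶ X)) → (objL I X l ⟶ objL I X l')
  | _, [] => 0
  | [], _ :: _ => 0
  | e :: t, e' :: t' =>
    if e = e' then biprod.map (𝟙 I) (incl t t')
    else incl (e :: t) t' ≫ biprod.inr
  termination_by l l' => l'.length

variable {I X}

lemma dXl_comp_zero {Y : C} {k : X ⟶ Y} : ∀ {l : List (I ⟶ X)},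
    (∀ e ∈ l, e ≫ k = 0) → dXl I X l ≫ k = 0
  | [], _ => zero_comp
  | e :: t, h => by
    have ht : dXl I X t ≫ k = 0 := dXl_comp_zero (fun x hx => h x (List.mem_cons_of_mem _ hx))
    have he : e ≫ k = 0 := h e (List.mem_cons_self)
    show (biprod.desc e (dXl I X t) : I ⊞ objL I X t ⟶ X) ≫ k = 0
    apply biprod.hom_ext' <;> simp [he, ht]

variable (hbip : ∀ X Y : C, dag (biprod.inl : X ⟶ X ⊞ Y) = biprod.fst ∧
        dag (biprod.inr : Y ⟶ X ⊞ Y) = biprod.snd)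

include hbip

lemma dXl_dagMono : ∀ {l : List (I ⟶ X)}, (∀ e ∈ l, IsDagMono e) →
    (l.Pairwise fun a b => a ≫ dag b = 0 ∧ b ≫ dag a = 0) → IsDagMono (dXl I X l)
  | [], _, _ => dagMono_of_src_zero _
  | e :: t, hu, ho => by
    obtain ⟨hpair, htail⟩ := List.pairwise_cons.mp ho
    have hIH : dXl I X t ≫ dag (dXl I X t) = 𝟙 (objL I X t) :=
      dXl_dagMono (fun x hx => hu x (List.mem_cons_of_mem _ hx)) htail
    have hto : dXl I X t ≫ dag e = 0 := dXl_comp_zero (fun x hx => (hpair x hx).2)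
    have het : e ≫ dag (dXl I X t) = 0 := by
      have := congrArg dag hto
      rwa [dag_comp, dag_dag, dag_zero] at this
    have hee : e ≫ dag e = 𝟙 I := hu e (List.mem_cons_self)
    unfold IsDagMono
    show biprod.desc e (dXl I X t) ≫ dag (biprod.desc e (dXl I X t)) = 𝟙 (I ⊞ objL I X t)
    rw [dag_desc hbip]
    apply biprod.hom_ext' <;> apply biprod.hom_ext <;>
      simp [objL, hee, het, hto, hIH]

end Lists

section Incl
variable [HasZeroObject C] [HasZeroMorphisms C] [HasBinaryBiproducts C] [DaggerStruct C]
variable {I X : C} [LinearOrder (I ⟶ X)]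

lemma subset_tail_of_ne {e e' : I ⟶ X} {t t' : List (I ⟶ X)}
    (hl : (e :: t).Pairwise (· < ·)) (hl' : (e' :: t').Pairwise (· < ·))
    (hsub : (e :: t) ⊆ (e' :: t')) (h : e ≠ e') : (e :: t) ⊆ t' := by
  obtain ⟨hl1, _⟩ := List.pairwise_cons.mp hl
  obtain ⟨hl'1, _⟩ := List.pairwise_cons.mp hl'
  have he : e ∈ t' := by
    rcases List.mem_cons.mp (hsub (List.mem_cons_self)) with h1 | h1
    · exact absurd h1 h
    · exact h1
  intro x hx
  rcases List.mem_cons.mp (hsub hx) with h1 | h1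
  · exfalso
    have hex : e ≤ x := by
      rcases List.mem_cons.mp hx with h2 | h2
      · exact le_of_eq h2.symm
      · exact le_of_lt (hl1 x h2)
    have : e' < e := hl'1 e he
    rw [h1] at hex
    exact absurd (lt_of_le_of_lt hex this) (lt_irrefl e)
  · exact h1

lemma subset_tail_of_eq {e : I ⟶ X} {t t' : List (I ⟶ X)}
    (hl : (e :: t).Pairwise (· < ·)) (hsub : (e :: t) ⊆ (e :: t')) : t ⊆ t' := by
  obtain ⟨hl1, _⟩ := List.pairwise_cons.mp hl
  intro x hx
  rcases List.mem_cons.mp (hsub (List.mem_cons_of_mem _ hx)) with h1 | h1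
  · exact absurd h1.symm (ne_of_lt (hl1 x hx))
  · exact h1

lemma incl_comp_dXl : ∀ (l' l : List (I ⟶ X)), l.Pairwise (· < ·) → l'.Pairwise (· < ·) →
    l ⊆ l' → incl I X l l' ≫ dXl I X l' = dXl I X l
  | [], l, _, _, hsub => by
    have h0 : l = [] := List.subset_nil.mp hsub
    subst h0
    simp [incl, dXl]
  | e' :: t', [], _, _, _ => by rw [incl, zero_comp]; rfl
  | e' :: t', e :: t, hl, hl', hsub => by
    have hlt := (List.pairwise_cons.mp hl).2
    have hl't := (List.pairwise_cons.mp hl').2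
    by_cases h : e = e'
    · subst h
      have hIH := incl_comp_dXl t' t hlt hl't (subset_tail_of_eq hl hsub)
      rw [incl]; erw [if_pos rfl]
      show biprod.map (𝟙 I) (incl I X t t') ≫ dXl I X (e :: t') = _
      rw [dXl, dXl]
      apply biprod.hom_ext' <;> simp [hIH]
    · have hIH := incl_comp_dXl t' (e :: t) hl hl't (subset_tail_of_ne hl hl' hsub h)
      rw [incl]; erw [if_neg h]
      show (incl I X (e :: t) t' ≫ (biprod.inr : objL I X t' ⟶ I ⊞ objL I X t')) ≫
        (biprod.desc e' (dXl I X t') : I ⊞ objL I X t' ⟶ X) = _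
      rw [Category.assoc, biprod.inr_desc, hIH]

lemma dagMono_inr (hbip : ∀ X Y : C, dag (biprod.inl : X ⟶ X ⊞ Y) = biprod.fst ∧
        dag (biprod.inr : Y ⟶ X ⊞ Y) = biprod.snd) {P Q : C} :
    IsDagMono (biprod.inr : Q ⟶ P ⊞ Q) := by
  unfold IsDagMono
  rw [(hbip P Q).2, biprod.inr_snd]

lemma incl_dagMono (hbip : ∀ X Y : C, dag (biprod.inl : X ⟶ X ⊞ Y) = biprod.fst ∧
        dag (biprod.inr : Y ⟶ X ⊞ Y) = biprod.snd) :
    ∀ (l' l : List (I ⟶ X)), l.Pairwise (· < ·) → l'.Pairwise (· < ·) →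
    l ⊆ l' → IsDagMono (incl I X l l')
  | [], l, _, _, hsub => by
    have h0 : l = [] := List.subset_nil.mp hsub
    subst h0
    exact dagMono_of_src_zero _
  | e' :: t', [], _, _, _ => dagMono_of_src_zero _
  | e' :: t', e :: t, hl, hl', hsub => by
    have hlt := (List.pairwise_cons.mp hl).2
    have hl't := (List.pairwise_cons.mp hl').2
    by_cases h : e = e'
    · subst h
      have hIH : incl I X t t' ≫ dag (incl I X t t') = 𝟙 (objL I X t) :=
        incl_dagMono hbip t' t hlt hl't (subset_tail_of_eq hl hsub)
      rw [incl]; erw [if_pos rfl]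
      unfold IsDagMono
      show biprod.map (𝟙 I) (incl I X t t') ≫ dag (biprod.map (𝟙 I) (incl I X t t')) = 𝟙 (I ⊞ objL I X t)
      rw [dag_map hbip, dag_id]
      apply biprod.hom_ext' <;> apply biprod.hom_ext <;> simp [objL, hIH]
    · have hIH : IsDagMono (incl I X (e :: t) t') :=
        incl_dagMono hbip t' (e :: t) hl hl't (subset_tail_of_ne hl hl' hsub h)
      rw [incl]; erw [if_neg h]
      exact dagMono_comp hIH (dagMono_inr hbip)

end Incl

section Funct
variable [HasZeroObject C] [HasZeroMorphisms C] [HasBinaryBiproducts C] [DaggerStruct C]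
variable (I X : C) [LinearOrder (I ⟶ X)]

lemma sort_subset {T T' : Finset (I ⟶ X)} (h : T ⊆ T') :
    T.sort (· ≤ ·) ⊆ T'.sort (· ≤ ·) := by
  intro x hx
  rw [Finset.mem_sort] at hx ⊢
  exact h hx

variable {I X} in
lemma dXl_sort_dagMono (hbip : ∀ X Y : C, dag (biprod.inl : X ⟶ X ⊞ Y) = biprod.fst ∧
        dag (biprod.inr : Y ⟶ X ⊞ Y) = biprod.snd)
    {E : Set (I ⟶ X)} (hE : ∀ e ∈ E, IsDagMono e)
    (horth : ∀ e ∈ E, ∀ e' ∈ E, e ≠ e' → e ≫ dag e' = 0)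
    {T : Finset (I ⟶ X)} (hT : ↑T ⊆ E) : IsDagMono (dXl I X (T.sort (· ≤ ·))) := by
  have hmem : ∀ e ∈ T.sort (· ≤ ·), e ∈ E := fun e he => hT (Finset.mem_sort _ |>.mp he)
  apply dXl_dagMono hbip (fun e he => hE e (hmem e he))
  have hs := (Finset.sortedLT_sort T).pairwise
  exact List.Pairwise.imp_of_mem
    (fun {a b} ha hb hab =>
      ⟨horth a (hmem a ha) b (hmem b hb) (ne_of_lt hab),
       horth b (hmem b hb) a (hmem a ha) (ne_of_gt hab)⟩) hs

/-- The directed diagram of finite iterated biproducts indexed by finite subsets of `E`. -/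
noncomputable def Fdiag (hbip : ∀ X Y : C, dag (biprod.inl : X ⟶ X ⊞ Y) = biprod.fst ∧
        dag (biprod.inr : Y ⟶ X ⊞ Y) = biprod.snd)
    (E : Set (I ⟶ X)) (hE : ∀ e ∈ E, IsDagMono e)
    (horth : ∀ e ∈ E, ∀ e' ∈ E, e ≠ e' → e ≫ dag e' = 0) :
    {T : Finset (I ⟶ X) // ↑T ⊆ E} ⥤ C where
  obj T := objL I X (T.1.sort (· ≤ ·))
  map {T T'} f := incl I X (T.1.sort (· ≤ ·)) (T'.1.sort (· ≤ ·))
  map_id T := by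
    apply dagMono_cancel (dXl_sort_dagMono hbip hE horth T.2)
    rw [Category.id_comp]
    exact incl_comp_dXl _ _ ((Finset.sortedLT_sort _).pairwise) ((Finset.sortedLT_sort _).pairwise)
      (sort_subset I X (by rfl))
  map_comp {T T' T''} f g := by
    apply dagMono_cancel (dXl_sort_dagMono hbip hE horth T''.2)
    have h1 := incl_comp_dXl (T''.1.sort (· ≤ ·)) (T.1.sort (· ≤ ·))
      ((Finset.sortedLT_sort _).pairwise) ((Finset.sortedLT_sort _).pairwise)
      (sort_subset I X (le_trans (leOfHom f) (leOfHom g)))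
    have h2 := incl_comp_dXl (T''.1.sort (· ≤ ·)) (T'.1.sort (· ≤ ·))
      ((Finset.sortedLT_sort _).pairwise) ((Finset.sortedLT_sort _).pairwise) (sort_subset I X (leOfHom g))
    have h3 := incl_comp_dXl (T'.1.sort (· ≤ ·)) (T.1.sort (· ≤ ·))
      ((Finset.sortedLT_sort _).pairwise) ((Finset.sortedLT_sort _).pairwise) (sort_subset I X (leOfHom f))
    rw [h1, Category.assoc, h2, h3]

@[simp] lemma Fdiag_obj (hbip) (E : Set (I ⟶ X)) (hE) (horth) (T) :
    (Fdiag I X hbip E hE horth).obj T = objL I X (T.1.sort (· ≤ ·)) := rfl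

@[simp] lemma Fdiag_map (hbip) (E : Set (I ⟶ X)) (hE) (horth) {T T'} (f : T ⟶ T') :
    (Fdiag I X hbip E hE horth).map f = incl I X (T.1.sort (· ≤ ·)) (T'.1.sort (· ≤ ·)) := rfl

end Funct

end Stmt17Aux

open Stmt17Aux DaggerStruct

/-- Under (H1)–(H4), every orthoclosed subspace `M = S⊥` of `V(X)` arises from a
dagger biproduct `A → X ← B` with `M = image V(h_A)`, `M⊥ = image V(h_B)`;
`V(h_A ∘ h_A†)` is the orthogonal projection onto `M`, and `V(X) = M ⊕ M⊥`, so
`V(X)` is orthomodular. -/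
theorem stmt_17 {C : Type u} [Category.{v} C] [HasZeroObject C] [HasZeroMorphisms C]
    [HasBinaryBiproducts C] [DaggerStruct C]
    (hbip : ∀ X Y : C, DaggerStruct.dag (biprod.inl : X ⟶ X ⊞ Y) = biprod.fst ∧
        DaggerStruct.dag (biprod.inr : Y ⟶ X ⊞ Y) = biprod.snd)
    (H2 : ∀ (J : Type v) [Preorder J] [IsDirected J (· ≤ ·)] [Nonempty J] (F : J ⥤ C),
      (∀ (i j : J) (h : i ≤ j), IsDagMono (F.map (homOfLE h))) →
      ∃ (X : C) (c : ∀ j : J, F.obj j ⟶ X),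
        (∀ j, IsDagMono (c j)) ∧
        (∀ (i j : J) (h : i ≤ j), F.map (homOfLE h) ≫ c j = c i) ∧
        (∀ (Y : C) (d : ∀ j : J, F.obj j ⟶ Y), (∀ j, IsDagMono (d j)) →
          (∀ (i j : J) (h : i ≤ j), F.map (homOfLE h) ≫ d j = d i) →
          ∃! m : X ⟶ Y, IsDagMono m ∧ ∀ j, c j ≫ m = d j) ∧
        (∀ (Y : C) (f g : X ⟶ Y), (∀ j, c j ≫ f = c j ≫ g) → f = g))
    (H3 : ∀ (A X : C) (f : A ⟶ X), IsDagMono f →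
      ∃ (B : C) (g : B ⟶ X), IsDagMono g ∧ f ≫ DaggerStruct.dag g = 0 ∧
        Nonempty (IsColimit (BinaryCofan.mk f g)))
    (I : C) (hI : DagSimple I)
    (H4a : ∀ A : C, ¬ IsZero A → ∃ u : I ⟶ A, u ≠ 0)
    (H4b : ∀ (A : C) (u : I ⟶ A), u ≠ 0 → ∃ h : I ⟶ I, IsIso h ∧ IsDagMono (h ≫ u))
    (X : C) (S : Set (I ⟶ X)) :
    ∃ (A B : C) (hA : A ⟶ X) (hB : B ⟶ X),
      -- A →hA X ←hB B is a dagger biproduct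
      IsDagMono hA ∧ IsDagMono hB ∧ hA ≫ DaggerStruct.dag hB = 0 ∧
      Nonempty (IsColimit (BinaryCofan.mk hA hB)) ∧
      -- M = S⊥ = image V(hA)
      (∀ w : I ⟶ X, (∀ s ∈ S, w ≫ DaggerStruct.dag s = 0) ↔ ∃ u : I ⟶ A, w = u ≫ hA) ∧
      -- M⊥ = image V(hB)
      (∀ w : I ⟶ X,
        (∀ m : I ⟶ X, (∀ s ∈ S, m ≫ DaggerStruct.dag s = 0) → w ≫ DaggerStruct.dag m = 0)
          ↔ ∃ v : I ⟶ B, w = v ≫ hB) ∧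
      -- V(hA ∘ hA†) is the orthogonal projection onto M:
      -- it fixes M and annihilates M⊥
      (∀ u : I ⟶ A, (u ≫ hA) ≫ (DaggerStruct.dag hA ≫ hA) = u ≫ hA) ∧
      (∀ w : I ⟶ X, w ≫ DaggerStruct.dag hA = 0 → w ≫ (DaggerStruct.dag hA ≫ hA) = 0) ∧
      -- splitting (orthomodularity): V(X) = M ⊕ M⊥
      (∀ w : I ⟶ X, ∃ (u : I ⟶ A) (v : I ⟶ B),
        w = daggerAdd (u ≫ hA) (v ≫ hB)) := by
  
  classical
  -- definiteness of the form
  have hdef : ∀ {Z : C} (q : I ⟶ Z), q ≫ dag q = 0 → q = 0 := by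
    intro Z q hq
    by_contra hne
    obtain ⟨h, _, hm⟩ := H4b Z q hne
    have h0 : 𝟙 I = 0 := by
      have := hm
      unfold IsDagMono at this
      rw [dag_comp, ← Category.assoc, Category.assoc h q, hq, comp_zero, zero_comp] at this
      exact this.symm
    exact hI.1 ((IsZero.iff_id_eq_zero I).mpr h0)
  letI : LinearOrder (I ⟶ X) := IsWellOrder.linearOrder WellOrderingRel
  -- Zorn's lemma: a maximal orthonormal subset of S⊥
  set Orth : Set (Set (I ⟶ X)) := {E | (∀ e ∈ E, IsDagMono e ∧ ∀ s ∈ S, e ≫ dag s = 0) ∧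
    (∀ e ∈ E, ∀ e' ∈ E, e ≠ e' → e ≫ dag e' = 0)} with hOrthdef
  obtain ⟨E, hEmax⟩ : ∃ E, Maximal (· ∈ Orth) E := by
    apply zorn_subset
    intro c hc hchain
    refine ⟨⋃₀ c, ⟨?_, ?_⟩, fun s hs => Set.subset_sUnion_of_mem hs⟩
    · rintro e ⟨E0, hE0, he⟩
      exact (hc hE0).1 e he
    · rintro e ⟨E0, hE0, he⟩ e' ⟨E1, hE1, he'⟩ hne
      rcases hchain.total hE0 hE1 with h | h
      · exact (hc hE1).2 e (h he) e' he' hne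
      · exact (hc hE0).2 e he e' (h he') hne
  have hOrthE : E ∈ Orth := hEmax.1
  have hE1 : ∀ e ∈ E, IsDagMono e := fun e he => (hOrthE.1 e he).1
  have hE2 : ∀ e ∈ E, ∀ s ∈ S, e ≫ dag s = 0 := fun e he => (hOrthE.1 e he).2
  have hE3 : ∀ e ∈ E, ∀ e' ∈ E, e ≠ e' → e ≫ dag e' = 0 := hOrthE.2
  -- the directed diagram
  set J := {T : Finset (I ⟶ X) // ↑T ⊆ E} with hJdef
  haveI : Nonempty J := ⟨⟨∅, by simp⟩⟩
  haveI : IsDirected J (· ≤ ·) := ⟨fun a b =>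
    ⟨⟨a.1 ∪ b.1, by
      intro x hx
      rcases Finset.mem_union.mp hx with h | h
      · exact a.2 h
      · exact b.2 h⟩,
     Finset.subset_union_left, Finset.subset_union_right⟩⟩
  set F := Fdiag I X hbip E hE1 hE3 with hFdef
  have hmono : ∀ (i j : J) (h : i ≤ j), IsDagMono (F.map (homOfLE h)) := by
    intro i j h
    exact incl_dagMono hbip _ _ ((Finset.sortedLT_sort _).pairwise) ((Finset.sortedLT_sort _).pairwise)
      (sort_subset I X h)
  obtain ⟨A₀, c, hcmono, hccomp, huniv, hjoint⟩ := H2 J F hmono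
  set d : ∀ T : J, F.obj T ⟶ X := fun T => dXl I X (T.1.sort (· ≤ ·)) with hddef
  have hd1 : ∀ T, IsDagMono (d T) := fun T => dXl_sort_dagMono hbip hE1 hE3 T.2
  have hd2 : ∀ (i j : J) (h : i ≤ j), F.map (homOfLE h) ≫ d j = d i := by
    intro i j h
    exact incl_comp_dXl _ _ ((Finset.sortedLT_sort _).pairwise) ((Finset.sortedLT_sort _).pairwise)
      (sort_subset I X h)
  obtain ⟨hA, ⟨hAmono, hAc⟩, -⟩ := huniv X d hd1 hd2
  -- hA is orthogonal to S
  have hAS : ∀ s ∈ S, hA ≫ dag s = 0 := by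
    intro s hs
    apply hjoint
    intro T
    rw [← Category.assoc, hAc T, comp_zero]
    exact dXl_comp_zero (fun e he => hE2 e (T.2 (Finset.mem_sort _ |>.mp he)) s hs)
  -- the complement
  obtain ⟨B, hB, hBmono, hABorth, hcolim⟩ := H3 A₀ X hA hAmono
  have hBA : hB ≫ dag hA = 0 := by
    have := congrArg dag hABorth
    rwa [dag_comp, dag_dag, dag_zero] at this
  obtain ⟨colim⟩ := hcolim
  have hdecomp : daggerAdd (dag hA ≫ hA) (dag hB ≫ hB) = 𝟙 X := by
    apply BinaryCofan.IsColimit.hom_ext colim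
    · show hA ≫ _ = hA ≫ 𝟙 X
      rw [comp_daggerAdd, Category.comp_id, ← Category.assoc, ← Category.assoc,
        hAmono, hABorth, Category.id_comp, zero_comp, daggerAdd_zero]
    · show hB ≫ _ = hB ≫ 𝟙 X
      rw [comp_daggerAdd, Category.comp_id, ← Category.assoc, ← Category.assoc,
        hBmono, hBA, Category.id_comp, zero_comp, zero_daggerAdd]
  have hsplit : ∀ w : I ⟶ X, w = daggerAdd ((w ≫ dag hA) ≫ hA) ((w ≫ dag hB) ≫ hB) := by
    intro w
    conv_lhs => rw [← Category.comp_id w, ← hdecomp]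
    rw [comp_daggerAdd, ← Category.assoc, ← Category.assoc]
  -- elements of E are in the image of hA
  have hEim : ∀ e ∈ E, ∃ u : I ⟶ A₀, e = u ≫ hA := by
    intro e he
    have hsing : Finset.sort ({e} : Finset (I ⟶ X)) (· ≤ ·) = [e] :=
      Finset.sort_singleton _ e
    obtain ⟨u', hu'⟩ : ∃ u' : I ⟶ objL I X (Finset.sort ({e} : Finset (I ⟶ X)) (· ≤ ·)),
        u' ≫ dXl I X (Finset.sort ({e} : Finset (I ⟶ X)) (· ≤ ·)) = e := by
      rw [hsing]
      exact ⟨biprod.inl, by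
        show (biprod.inl : I ⟶ I ⊞ objL I X []) ≫ biprod.desc e (dXl I X []) = e
        rw [biprod.inl_desc]⟩
    refine ⟨u' ≫ c ⟨{e}, by simp [he]⟩, ?_⟩
    erw [Category.assoc, hAc]
    exact hu'.symm
  -- Claim A: every vector of S⊥ has no B-component
  have hclaimA : ∀ w : I ⟶ X, (∀ s ∈ S, w ≫ dag s = 0) → w ≫ dag hB = 0 := by
    intro w hw
    by_contra hv
    set w' : I ⟶ X := (w ≫ dag hB) ≫ hB with hw'def
    have hw'B : w' ≫ dag hB = w ≫ dag hB := by
      rw [hw'def, Category.assoc, hBmono, Category.comp_id]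
    have hw'ne : w' ≠ 0 := fun h0 => hv (by rw [← hw'B, h0, zero_comp])
    have hw'A : w' ≫ dag hA = 0 := by
      rw [hw'def, Category.assoc, hBA, comp_zero]
    have hw'S : ∀ s ∈ S, w' ≫ dag s = 0 := by
      intro s hs
      have h1 : ((w ≫ dag hA) ≫ hA) ≫ dag s = 0 := by
        rw [Category.assoc, hAS s hs, comp_zero]
      calc w' ≫ dag s
          = daggerAdd (((w ≫ dag hA) ≫ hA) ≫ dag s) (w' ≫ dag s) := by
            rw [h1, zero_daggerAdd]
        _ = daggerAdd ((w ≫ dag hA) ≫ hA) w' ≫ dag s := (daggerAdd_comp _ _ _).symm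
        _ = w ≫ dag s := by rw [hw'def, ← hsplit w]
        _ = 0 := hw s hs
    have hw'E : ∀ e ∈ E, w' ≫ dag e = 0 := by
      intro e he
      obtain ⟨u, hu⟩ := hEim e he
      rw [hu, dag_comp, ← Category.assoc, hw'A, zero_comp]
    obtain ⟨h, _, hmono'⟩ := H4b X w' hw'ne
    set e₀ : I ⟶ X := h ≫ w' with he₀def
    have he₀E : ∀ e ∈ E, e₀ ≫ dag e = 0 := by
      intro e he
      rw [he₀def, Category.assoc, hw'E e he, comp_zero]
    have he₀E' : ∀ e ∈ E, e ≫ dag e₀ = 0 := by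
      intro e he
      have := congrArg dag (he₀E e he)
      rwa [dag_comp, dag_dag, dag_zero] at this
    have he₀nm : e₀ ∉ E := by
      intro hmem
      have h1 : e₀ ≫ dag e₀ = 0 := he₀E e₀ hmem
      have h2 : e₀ ≫ dag e₀ = 𝟙 I := hmono'
      exact hI.1 ((IsZero.iff_id_eq_zero I).mpr (h2 ▸ h1))
    have hOrth' : insert e₀ E ∈ Orth := by
      constructor
      · rintro e (rfl | he)
        · refine ⟨hmono', ?_⟩
          intro s hs
          rw [he₀def, Category.assoc, hw'S s hs, comp_zero]
        · exact hOrthE.1 e he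
      · rintro e (rfl | he) e' (rfl | he') hne
        · exact absurd rfl hne
        · exact he₀E e' he'
        · exact he₀E' e he
        · exact hE3 e he e' he' hne
    exact he₀nm (hEmax.2 hOrth' (Set.subset_insert _ _) (Set.mem_insert _ _))
  -- membership in M = S⊥ is factorization through hA
  have hMA : ∀ w : I ⟶ X, (∀ s ∈ S, w ≫ dag s = 0) ↔ ∃ u : I ⟶ A₀, w = u ≫ hA := by
    intro w
    constructor
    · intro hw
      refine ⟨w ≫ dag hA, ?_⟩
      have hB0 : w ≫ dag hB = 0 := hclaimA w hw
      conv_lhs => rw [hsplit w]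
      rw [hB0, zero_comp, daggerAdd_zero]
    · rintro ⟨u, rfl⟩ s hs
      rw [Category.assoc, hAS s hs, comp_zero]
  refine ⟨A₀, B, hA, hB, hAmono, hBmono, hABorth, ⟨colim⟩, hMA, ?_, ?_, ?_, ?_⟩
  · -- M⊥ = image of hB
    intro w
    constructor
    · intro hw
      have hp : ∀ s ∈ S, ((w ≫ dag hA) ≫ hA) ≫ dag s = 0 := by
        intro s hs
        rw [Category.assoc, hAS s hs, comp_zero]
      have h0 := hw ((w ≫ dag hA) ≫ hA) hp
      -- h0 : w ≫ dag ((w ≫ dag hA) ≫ hA) = 0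
      have hq : (w ≫ dag hA) ≫ dag (w ≫ dag hA) = 0 := by
        simp only [dag_comp, dag_dag, Category.assoc]
        simpa only [dag_comp, dag_dag, Category.assoc] using h0
      have hq0 : w ≫ dag hA = 0 := hdef _ hq
      refine ⟨w ≫ dag hB, ?_⟩
      conv_lhs => rw [hsplit w]
      rw [hq0, zero_comp, zero_daggerAdd]
    · rintro ⟨v, rfl⟩ m hm
      obtain ⟨u, rfl⟩ := (hMA m).mp hm
      rw [dag_comp, Category.assoc, ← Category.assoc hB, hBA, zero_comp, comp_zero]
  · intro u
    rw [Category.assoc, ← Category.assoc hA, hAmono, Category.id_comp]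
  · intro w hw
    rw [← Category.assoc, hw, zero_comp]
  · intro w
    exact ⟨w ≫ dag hA, w ≫ dag hB, hsplit w⟩
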